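/- Let r > 0 and a ∈ ℂ with a ≠ −2r. With b̃₁(z) = 1 and b̃₂(z) = −z² − iza, one has det [[b̃₁(ir), b̃₂(ir)],[∂_z b̃₁(ir), ∂_z b̃₂(ir)]] = −i(a + 2r) ≠ 0. -/

import Mathlib

theorem stmt_6 (r : ℝ) (hr : 0 < r) (a : ℂ) (ha : a ≠ -2 * (r : ℂ))
    (b₁ b₂ : ℂ → ℂ) (hb₁ : ∀ z, b₁ z = 1)
    (hb₂ : ∀ z, b₂ z = -z ^ 2 - Complex.I * z * a) :
    Matrix.det !![b₁ (Complex.I * (r : ℂ)), b₂ (Complex.I * (r : ℂ));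
        deriv b₁ (Complex.I * (r : ℂ)), deriv b₂ (Complex.I * (r : ℂ))]
      = -Complex.I * (a + 2 * (r : ℂ)) ∧
    Matrix.det !![b₁ (Complex.I * (r : ℂ)), b₂ (Complex.I * (r : ℂ));
        deriv b₁ (Complex.I * (r : ℂ)), deriv b₂ (Complex.I * (r : ℂ))] ≠ 0 := by
  have hb₁' : b₁ = fun _ => (1 : ℂ) := funext hb₁
  have hb₂' : b₂ = fun z => -z ^ 2 - Complex.I * z * a := funext hb₂
  have hd1 : deriv b₁ (Complex.I * (r : ℂ)) = 0 := by
    rw [hb₁']; simp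
  have hd2 : deriv b₂ (Complex.I * (r : ℂ)) = -(2 * (Complex.I * r)) - Complex.I * a := by
    rw [hb₂']
    have h : HasDerivAt (fun z : ℂ => -z ^ 2 - Complex.I * z * a)
        (-(2 * (Complex.I * r)) - Complex.I * a) (Complex.I * r) := by
      have h1 : HasDerivAt (fun z : ℂ => -z ^ 2) (-(2 * (Complex.I * r))) (Complex.I * r) := by
        simpa using ((hasDerivAt_pow 2 (Complex.I * r)).fun_neg)
      have h2 : HasDerivAt (fun z : ℂ => Complex.I * z * a) (Complex.I * a) (Complex.I * r) := by
        simpa [mul_comm, mul_assoc] using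
          (((hasDerivAt_id (Complex.I * (r : ℂ))).const_mul Complex.I).mul_const a)
      exact h1.sub h2
    exact h.deriv
  have key : Matrix.det !![b₁ (Complex.I * (r : ℂ)), b₂ (Complex.I * (r : ℂ));
        deriv b₁ (Complex.I * (r : ℂ)), deriv b₂ (Complex.I * (r : ℂ))]
      = -Complex.I * (a + 2 * (r : ℂ)) := by
    rw [Matrix.det_fin_two_of, hb₁, hd1, hd2]
    ring_nf
  refine ⟨key, ?_⟩
  rw [key]
  intro h
  rcases mul_eq_zero.mp h with h' | h'
  · simp [Complex.I_ne_zero] at h'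
  · apply ha
    linear_combination h'
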